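/- Let p ≥ 5 be a prime and H a finite p-group of order p^6 and maximal class (nilpotency class 5). Then H has two small derived quotients if and only if H is not metabelian (i.e., H'' ≠ 1). -/

import Mathlib

open Subgroup
open scoped Pointwise
open scoped commutatorElement

section Aux

variable {G : Type*} [Group G]

private lemma aux_comm_mul_left (a b c : G) : ⁅a * b, c⁆ = (a * ⁅b, c⁆ * a⁻¹) * ⁅a, c⁆ := by
  simp only [commutatorElement_def]; group

private lemma aux_comm_mul_right (a b c : G) : ⁅a, b * c⁆ = ⁅a, b⁆ * (b * ⁅a, c⁆ * b⁻¹) := by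
  simp only [commutatorElement_def]; group

private lemma aux_comm_inv_left (a b : G) : ⁅a⁻¹, b⁆ = a⁻¹ * ⁅a, b⁆⁻¹ * a := by
  simp only [commutatorElement_def]; group

private lemma aux_comm_inv_right (a b : G) : ⁅a, b⁻¹⁆ = b⁻¹ * ⁅a, b⁆⁻¹ * b := by
  simp only [commutatorElement_def]; group

private lemma aux_lcs_succ (n : ℕ) :
    (⊤ : Subgroup G).lowerCentralSeries (n + 1) = ⁅(⊤ : Subgroup G).lowerCentralSeries n, (⊤ : Subgroup G)⁆ := rfl

/-- Three subgroups lemma with a normal target. -/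
private lemma aux_three_subgroups {A B C N : Subgroup G} [N.Normal]
    (h1 : ⁅⁅B, C⁆, A⁆ ≤ N) (h2 : ⁅⁅C, A⁆, B⁆ ≤ N) : ⁅⁅A, B⁆, C⁆ ≤ N := by
  have key : ∀ X Y Z : Subgroup G, ⁅⁅X, Y⁆, Z⁆ ≤ N ↔
      ⁅⁅X.map (QuotientGroup.mk' N), Y.map (QuotientGroup.mk' N)⁆,
        Z.map (QuotientGroup.mk' N)⁆ = ⊥ := by
    intro X Y Z
    rw [← map_commutator, ← map_commutator, Subgroup.map_eq_bot_iff, QuotientGroup.ker_mk']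
  exact (key A B C).mpr (commutator_commutator_eq_bot_of_rotate
    ((key B C A).mp h1) ((key C A B).mp h2))

private lemma aux_lcs_comm (m n : ℕ) :
    ⁅(⊤ : Subgroup G).lowerCentralSeries m, (⊤ : Subgroup G).lowerCentralSeries n⁆ ≤ (⊤ : Subgroup G).lowerCentralSeries (m + n + 1) := by
  induction n generalizing m with
  | zero =>
    rw [Subgroup.lowerCentralSeries_zero, ← aux_lcs_succ _]
  | succ n ih =>
    rw [aux_lcs_succ _, commutator_comm]
    refine aux_three_subgroups ?_ ?_
    · have h := ih (m + 1)
      rw [show m + 1 + n + 1 = m + (n + 1) + 1 by omega] at h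
      calc ⁅⁅(⊤ : Subgroup G), (⊤ : Subgroup G).lowerCentralSeries m⁆, (⊤ : Subgroup G).lowerCentralSeries n⁆
          = ⁅⁅(⊤ : Subgroup G).lowerCentralSeries m, (⊤ : Subgroup G)⁆, (⊤ : Subgroup G).lowerCentralSeries n⁆ := by
            rw [commutator_comm (⊤ : Subgroup G)]
        _ = ⁅(⊤ : Subgroup G).lowerCentralSeries (m + 1), (⊤ : Subgroup G).lowerCentralSeries n⁆ := by
            rw [← aux_lcs_succ _]
        _ ≤ _ := h
    · calc ⁅⁅(⊤ : Subgroup G).lowerCentralSeries m, (⊤ : Subgroup G).lowerCentralSeries n⁆, (⊤ : Subgroup G)⁆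
          ≤ ⁅(⊤ : Subgroup G).lowerCentralSeries (m + n + 1), (⊤ : Subgroup G)⁆ :=
            commutator_mono (ih m) le_rfl
        _ = (⊤ : Subgroup G).lowerCentralSeries (m + n + 1 + 1) := (aux_lcs_succ _).symm
        _ = (⊤ : Subgroup G).lowerCentralSeries (m + (n + 1) + 1) := by rw [show m + n + 1 + 1 = m + (n + 1) + 1 by omega]

private lemma aux_lcs_stab (n : ℕ) (h : (⊤ : Subgroup G).lowerCentralSeries (n + 1) = (⊤ : Subgroup G).lowerCentralSeries n) :
    ∀ m, n ≤ m → (⊤ : Subgroup G).lowerCentralSeries m = (⊤ : Subgroup G).lowerCentralSeries n := by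
  intro m hm
  induction m, hm using Nat.le_induction with
  | base => rfl
  | succ m hm ih => rw [aux_lcs_succ _, ih, ← aux_lcs_succ _, h]

private lemma aux_comm_pow {x y : G} (h : Commute ⁅x, y⁆ x) :
    ∀ n : ℕ, ⁅x ^ n, y⁆ = ⁅x, y⁆ ^ n := by
  intro n
  induction n with
  | zero => simp
  | succ n ih =>
    rw [pow_succ', aux_comm_mul_left, ih]
    have hx : x * ⁅x, y⁆ ^ n * x⁻¹ = ⁅x, y⁆ ^ n := by
      rw [(h.pow_left n).symm.eq]; group
    rw [hx, ← pow_succ]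

private lemma aux_inner {K Z : Subgroup G} {T : Set G} (hT : T ⊆ (K : Set G))
    (hZ : ∀ z ∈ Z, ∀ k ∈ K, Commute z k)
    {w : G} (hgen : ∀ t ∈ T, ⁅w, t⁆ ∈ Z) :
    ∀ b ∈ closure T, ⁅w, b⁆ ∈ Z := by
  have hTK : closure T ≤ K := (closure_le K).mpr hT
  intro b hb
  induction hb using closure_induction with
  | mem t ht => exact hgen t ht
  | one => simpa using Z.one_mem
  | mul b₁ b₂ hb₁ hb₂ ih₁ ih₂ =>
    rw [aux_comm_mul_right]
    have h1 : b₁ * ⁅w, b₂⁆ * b₁⁻¹ = ⁅w, b₂⁆ := by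
      rw [(hZ _ ih₂ b₁ (hTK hb₁)).symm.eq]; group
    rw [h1]; exact Z.mul_mem ih₁ ih₂
  | inv b hb ih =>
    rw [aux_comm_inv_right]
    have h1 : b⁻¹ * ⁅w, b⁆⁻¹ * b = ⁅w, b⁆⁻¹ := by
      rw [mul_assoc, (hZ _ (Z.inv_mem ih) b (hTK hb)).eq]; group
    rw [h1]; exact Z.inv_mem ih

private lemma aux_comm_mem {K Z : Subgroup G} {T : Set G} (hT : T ⊆ (K : Set G))
    (hKT : K ≤ closure T)
    (hZ : ∀ z ∈ Z, ∀ k ∈ K, Commute z k)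
    (hgen2 : ∀ s ∈ T, ∀ t ∈ T, ⁅s, t⁆ ∈ Z) :
    ∀ a ∈ K, ∀ b ∈ K, ⁅a, b⁆ ∈ Z := by
  have hTK : closure T ≤ K := (closure_le K).mpr hT
  intro a ha b hb
  suffices hmain : ∀ a' ∈ closure T, ⁅a', b⁆ ∈ Z from hmain a (hKT ha)
  intro a' ha'
  clear ha a
  induction ha' using closure_induction with
  | mem s hs => exact aux_inner hT hZ (fun t ht => hgen2 s hs t ht) b (hKT hb)
  | one => simpa using Z.one_mem
  | mul a₁ a₂ ha₁ ha₂ ih₁ ih₂ =>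
    rw [aux_comm_mul_left]
    have h1 : a₁ * ⁅a₂, b⁆ * a₁⁻¹ = ⁅a₂, b⁆ := by
      rw [(hZ _ ih₂ a₁ (hTK ha₁)).symm.eq]; group
    rw [h1]; exact Z.mul_mem ih₂ ih₁
  | inv a ha ih =>
    rw [aux_comm_inv_left]
    have h1 : a⁻¹ * ⁅a, b⁆⁻¹ * a = ⁅a, b⁆⁻¹ := by
      rw [mul_assoc, (hZ _ (Z.inv_mem ih) a (hTK ha)).eq]; group
    rw [h1]; exact Z.inv_mem ih

private lemma aux_commute_sup {a : G} {N : Subgroup G} [N.Normal]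
    (hcen : ∀ d ∈ N, ∀ k ∈ zpowers a ⊔ N, Commute d k) :
    ∀ u ∈ zpowers a ⊔ N, ∀ v ∈ zpowers a ⊔ N, Commute u v := by
  intro u hu v hv
  have hu' : u ∈ ((zpowers a : Subgroup G) : Set G) * (N : Set G) := by
    rw [← mul_normal]; exact hu
  have hv' : v ∈ ((zpowers a : Subgroup G) : Set G) * (N : Set G) := by
    rw [← mul_normal]; exact hv
  obtain ⟨s, hs, d, hd, rfl⟩ := hu'
  obtain ⟨t, ht, e, he, rfl⟩ := hv'
  have hsS : s ∈ zpowers a ⊔ N := mem_sup_left hs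
  have htS : t ∈ zpowers a ⊔ N := mem_sup_left ht
  have hst : Commute s t := by
    obtain ⟨i, rfl⟩ := mem_zpowers_iff.mp hs
    obtain ⟨j, rfl⟩ := mem_zpowers_iff.mp ht
    exact (Commute.refl a).zpow_zpow i j
  exact Commute.mul_left (hst.mul_right ((hcen e he s hsS).symm))
    ((hcen d hd t htS).mul_right (hcen d hd e (mem_sup_right he)))

private lemma aux_not_index_p {p : ℕ} (hp : p.Prime) {H : Type*} [Group H] [Finite H]
    (h5 : (⊤ : Subgroup H).lowerCentralSeries 5 = ⊥) (h4 : (⊤ : Subgroup H).lowerCentralSeries 4 ≠ ⊥)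
    (hidx : ((⊤ : Subgroup H).lowerCentralSeries 1).index = p) : False := by
  have hne : (⊤ : Subgroup H).lowerCentralSeries 1 ≠ ⊤ := by
    intro h; rw [h, index_top] at hidx; exact hp.one_lt.ne' hidx.symm
  obtain ⟨x, hx⟩ : ∃ x, x ∉ (⊤ : Subgroup H).lowerCentralSeries 1 := by
    by_contra hc; push_neg at hc; exact hne ((eq_top_iff' _).mpr hc)
  have hLM : (⊤ : Subgroup H).lowerCentralSeries 1 ≤ zpowers x ⊔ (⊤ : Subgroup H).lowerCentralSeries 1 := le_sup_right
  have hdvd : (zpowers x ⊔ (⊤ : Subgroup H).lowerCentralSeries 1).index ∣ p := hidx ▸ index_dvd_of_le hLM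
  have hMtop : zpowers x ⊔ (⊤ : Subgroup H).lowerCentralSeries 1 = ⊤ := by
    rcases hp.eq_one_or_self_of_dvd _ hdvd with h1 | h1
    · exact index_eq_one.mp h1
    · exfalso
      have e1 := Subgroup.card_mul_index ((⊤ : Subgroup H).lowerCentralSeries 1)
      have e2 := Subgroup.card_mul_index (zpowers x ⊔ (⊤ : Subgroup H).lowerCentralSeries 1)
      rw [hidx] at e1; rw [h1] at e2
      have hcards : Nat.card (zpowers x ⊔ (⊤ : Subgroup H).lowerCentralSeries 1 : Subgroup H)
          = Nat.card ((⊤ : Subgroup H).lowerCentralSeries 1) :=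
        (Nat.eq_of_mul_eq_mul_right hp.pos (e2.trans e1.symm))
      have heq := Subgroup.eq_of_le_of_card_ge hLM (le_of_eq hcards)
      have hxM : x ∈ zpowers x ⊔ (⊤ : Subgroup H).lowerCentralSeries 1 := mem_sup_left (mem_zpowers x)
      rw [← heq] at hxM
      exact hx hxM
  set π := QuotientGroup.mk' ((⊤ : Subgroup H).lowerCentralSeries 2) with hπ
  have hker : π.ker = (⊤ : Subgroup H).lowerCentralSeries 2 := QuotientGroup.ker_mk' _
  have hmem2 : ∀ u ∈ (⊤ : Subgroup H).lowerCentralSeries 1, ∀ h : H, ⁅u, h⁆ ∈ (⊤ : Subgroup H).lowerCentralSeries 2 := by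
    intro u hu h
    show ⁅u, h⁆ ∈ (⊤ : Subgroup H).lowerCentralSeries (1 + 1)
    rw [aux_lcs_succ _]
    exact commutator_mem_commutator hu (mem_top h)
  have hC : ∀ c ∈ Subgroup.map π ((⊤ : Subgroup H).lowerCentralSeries 1),
      ∀ q : H ⧸ (⊤ : Subgroup H).lowerCentralSeries 2, Commute c q := by
    intro c hc q
    obtain ⟨u, hu, rfl⟩ := hc
    obtain ⟨h, rfl⟩ := QuotientGroup.mk'_surjective _ q
    rw [← commutatorElement_eq_one_iff_commute, ← map_commutatorElement]
    exact (QuotientGroup.eq_one_iff _).mpr (hmem2 u hu h)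
  haveI hCnormal : (Subgroup.map π ((⊤ : Subgroup H).lowerCentralSeries 1)).Normal := by
    constructor
    intro n hn g
    have hgn : g * n * g⁻¹ = n := by rw [(hC n hn g).symm.eq]; group
    rw [hgn]; exact hn
  have hdecomp : ∀ g : H,
      (π g) ∈ zpowers (π x) ⊔ Subgroup.map π ((⊤ : Subgroup H).lowerCentralSeries 1) := by
    intro g
    have hg : g ∈ zpowers x ⊔ (⊤ : Subgroup H).lowerCentralSeries 1 := by rw [hMtop]; exact mem_top g
    have hmap : π g ∈ Subgroup.map π (zpowers x ⊔ (⊤ : Subgroup H).lowerCentralSeries 1) :=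
      mem_map_of_mem π hg
    rwa [Subgroup.map_sup, MonoidHom.map_zpowers] at hmap
  have hcomm : ∀ g h : H, ⁅g, h⁆ ∈ (⊤ : Subgroup H).lowerCentralSeries 2 := by
    intro g h
    have hcq := aux_commute_sup (a := π x) (N := Subgroup.map π ((⊤ : Subgroup H).lowerCentralSeries 1))
      (fun d hd k _ => hC d hd k) (π g) (hdecomp g) (π h) (hdecomp h)
    have h1 : π ⁅g, h⁆ = 1 := by
      rw [map_commutatorElement]
      exact commutatorElement_eq_one_iff_commute.mpr hcq
    rw [← hker]
    exact MonoidHom.mem_ker.mpr h1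
  have h12 : (⊤ : Subgroup H).lowerCentralSeries 1 ≤ (⊤ : Subgroup H).lowerCentralSeries 2 := by
    have hc : commutator H ≤ (⊤ : Subgroup H).lowerCentralSeries 2 := by
      rw [_root_.commutator_def]
      exact commutator_le.mpr fun g _ h _ => hcomm g h
    rw [Subgroup.top_lowerCentralSeries_one]
    exact hc
  have heq : (⊤ : Subgroup H).lowerCentralSeries 2 = (⊤ : Subgroup H).lowerCentralSeries 1 :=
    le_antisymm (Subgroup.lowerCentralSeries_antitone ⊤ (Nat.le_succ 1)) h12
  have h41 := aux_lcs_stab 1 heq 4 (by norm_num)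
  have h51 := aux_lcs_stab 1 heq 5 (by norm_num)
  exact h4 (h41.trans (h51.symm.trans h5))

private lemma aux_not_card_sq {p : ℕ} (hp : p.Prime) {H : Type*} [Group H] [Finite H]
    (hcard : Nat.card H = p ^ 6)
    (hK4 : Nat.card ((⊤ : Subgroup H).lowerCentralSeries 1) = p ^ 4)
    (hDK : ∀ d ∈ derivedSeries H 2, ∀ k ∈ (⊤ : Subgroup H).lowerCentralSeries 1, Commute d k)
    (hD2 : derivedSeries H 2 ≠ ⊥)
    (hDcard : Nat.card (derivedSeries H 2) = p ^ 2) : False := by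
  haveI hN : (derivedSeries H 2).Normal := derivedSeries_normal H 2
  have hDform : derivedSeries H 2 = ⁅(⊤ : Subgroup H).lowerCentralSeries 1, (⊤ : Subgroup H).lowerCentralSeries 1⁆ := rfl
  have hDsubK : derivedSeries H 2 ≤ (⊤ : Subgroup H).lowerCentralSeries 1 := by
    rw [hDform]; exact commutator_le_left _ _
  set π := QuotientGroup.mk' (derivedSeries H 2) with hπ
  have hker : π.ker = derivedSeries H 2 := QuotientGroup.ker_mk' _
  -- index and card computations
  have hp6 : Nat.card ((⊤ : Subgroup H).lowerCentralSeries 1) * ((⊤ : Subgroup H).lowerCentralSeries 1).index = p ^ 6 := by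
    rw [Subgroup.card_mul_index, hcard]
  have hKidx : ((⊤ : Subgroup H).lowerCentralSeries 1).index = p ^ 2 := by
    rw [hK4] at hp6
    have h' : p ^ 4 * ((⊤ : Subgroup H).lowerCentralSeries 1).index = p ^ 4 * p ^ 2 := by
      rw [hp6]; ring
    exact Nat.eq_of_mul_eq_mul_left (pow_pos hp.pos 4) h'
  have hp6' : Nat.card (derivedSeries H 2) * (derivedSeries H 2).index = p ^ 6 := by
    rw [Subgroup.card_mul_index, hcard]
  have hDidx : (derivedSeries H 2).index = p ^ 4 := by
    rw [hDcard] at hp6'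
    have h' : p ^ 2 * (derivedSeries H 2).index = p ^ 2 * p ^ 4 := by rw [hp6']; ring
    exact Nat.eq_of_mul_eq_mul_left (pow_pos hp.pos 2) h'
  have hQcard : Nat.card (H ⧸ derivedSeries H 2) = p ^ 4 := by
    rw [← Subgroup.index_eq_card]; exact hDidx
  have hKbar_idx : (Subgroup.map π ((⊤ : Subgroup H).lowerCentralSeries 1)).index = p ^ 2 := by
    rw [((⊤ : Subgroup H).lowerCentralSeries 1).index_map_eq (QuotientGroup.mk'_surjective _)
      (le_trans (le_of_eq hker) hDsubK)]
    exact hKidx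
  have hKbar_card : Nat.card (Subgroup.map π ((⊤ : Subgroup H).lowerCentralSeries 1)) = p ^ 2 := by
    have hmi := Subgroup.card_mul_index (Subgroup.map π ((⊤ : Subgroup H).lowerCentralSeries 1))
    rw [hKbar_idx, hQcard] at hmi
    have h' : Nat.card (Subgroup.map π ((⊤ : Subgroup H).lowerCentralSeries 1)) * p ^ 2 = p ^ 2 * p ^ 2 := by
      rw [hmi]; ring
    exact Nat.eq_of_mul_eq_mul_right (pow_pos hp.pos 2) h'
  by_cases hcyc : ∃ g ∈ (⊤ : Subgroup H).lowerCentralSeries 1, orderOf (π g) = p ^ 2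
  · -- cyclic case : K abelian, contradiction with D ≠ ⊥
    obtain ⟨g, hgK, hord⟩ := hcyc
    have hzle : zpowers (π g) ≤ Subgroup.map π ((⊤ : Subgroup H).lowerCentralSeries 1) :=
      zpowers_le.mpr (mem_map_of_mem π hgK)
    have hzeq : zpowers (π g) = Subgroup.map π ((⊤ : Subgroup H).lowerCentralSeries 1) := by
      refine Subgroup.eq_of_le_of_card_ge hzle ?_
      rw [hKbar_card, Nat.card_zpowers, hord]
    have hKdec : zpowers g ⊔ derivedSeries H 2 = (⊤ : Subgroup H).lowerCentralSeries 1 := by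
      have h1 : Subgroup.map π (zpowers g) = Subgroup.map π ((⊤ : Subgroup H).lowerCentralSeries 1) := by
        rw [MonoidHom.map_zpowers]; exact hzeq
      have h2 := congrArg (Subgroup.comap π) h1
      rw [comap_map_eq, comap_map_eq, hker] at h2
      rw [h2, sup_of_le_left hDsubK]
    have habel : ∀ u ∈ (⊤ : Subgroup H).lowerCentralSeries 1, ∀ v ∈ (⊤ : Subgroup H).lowerCentralSeries 1, Commute u v := by
      intro u hu v hv
      refine aux_commute_sup (a := g) (N := derivedSeries H 2) ?_ u ?_ v ?_
      · intro d hd k hk; exact hDK d hd k (hKdec ▸ hk)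
      · rw [hKdec]; exact hu
      · rw [hKdec]; exact hv
    refine hD2 ?_
    rw [hDform, eq_bot_iff]
    exact commutator_le.mpr fun a ha b hb =>
      mem_bot.mpr (commutatorElement_eq_one_iff_commute.mpr (habel a ha b hb))
  · push_neg at hcyc
    have hdvdp : ∀ g ∈ (⊤ : Subgroup H).lowerCentralSeries 1, orderOf (π g) ∣ p := by
      intro g hg
      have hdvd2 : orderOf (π g) ∣ p ^ 2 := by
        rw [← Nat.card_zpowers]
        exact hKbar_card ▸ card_dvd_of_le (zpowers_le.mpr (mem_map_of_mem π hg))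
      obtain ⟨k, hk2, hkeq⟩ := (Nat.dvd_prime_pow hp).mp hdvd2
      have hk1 : k ≤ 1 := by
        by_contra hk
        have hk2' : k = 2 := by omega
        exact hcyc g hg (by rw [hkeq, hk2'])
      calc orderOf (π g) = p ^ k := hkeq
        _ ∣ p ^ 1 := pow_dvd_pow p hk1
        _ = p := pow_one p
    have hpow : ∀ g ∈ (⊤ : Subgroup H).lowerCentralSeries 1, g ^ p ∈ derivedSeries H 2 := by
      intro g hg
      have h1 : (π g) ^ p = 1 := orderOf_dvd_iff_pow_eq_one.mp (hdvdp g hg)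
      have h2 : π (g ^ p) = 1 := by rw [map_pow]; exact h1
      rw [← hker]
      exact MonoidHom.mem_ker.mpr h2
    have hKbar_ne : Subgroup.map π ((⊤ : Subgroup H).lowerCentralSeries 1) ≠ ⊥ := by
      intro h
      rw [h, Subgroup.card_bot] at hKbar_card
      have := Nat.one_lt_pow two_ne_zero hp.one_lt
      omega
    obtain ⟨xb, hxbK, hxb1⟩ : ∃ xb ∈ Subgroup.map π ((⊤ : Subgroup H).lowerCentralSeries 1), xb ≠ 1 := by
      by_contra hc; push_neg at hc
      exact hKbar_ne (eq_bot_iff_forall _ |>.mpr hc)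
    obtain ⟨x, hxK, rfl⟩ := hxbK
    have hordx : orderOf (π x) = p := by
      rcases hp.eq_one_or_self_of_dvd _ (hdvdp x hxK) with h1 | h1
      · exact absurd (orderOf_eq_one_iff.mp h1) hxb1
      · exact h1
    have hA1card : Nat.card (zpowers (π x)) = p := by rw [Nat.card_zpowers, hordx]
    have hA1le : zpowers (π x) ≤ Subgroup.map π ((⊤ : Subgroup H).lowerCentralSeries 1) :=
      zpowers_le.mpr (mem_map_of_mem π hxK)
    have hA1ne : zpowers (π x) ≠ Subgroup.map π ((⊤ : Subgroup H).lowerCentralSeries 1) := by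
      intro h
      rw [h, hKbar_card] at hA1card
      have h2 : p < p ^ 2 := by nlinarith [hp.two_le]
      omega
    obtain ⟨yb, hybK, hybA⟩ :
        ∃ yb ∈ Subgroup.map π ((⊤ : Subgroup H).lowerCentralSeries 1), yb ∉ zpowers (π x) := by
      by_contra hc; push_neg at hc
      exact hA1ne (le_antisymm hA1le hc)
    obtain ⟨y, hyK, rfl⟩ := hybK
    have hB1le : closure {π x, π y} ≤ Subgroup.map π ((⊤ : Subgroup H).lowerCentralSeries 1) := by
      rw [closure_le]
      intro z hz
      simp only [Set.mem_insert_iff, Set.mem_singleton_iff] at hz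
      rcases hz with rfl | rfl
      · exact mem_map_of_mem π hxK
      · exact mem_map_of_mem π hyK
    have hxB1 : π x ∈ closure {π x, π y} := subset_closure (Set.mem_insert _ _)
    have hyB1 : π y ∈ closure {π x, π y} := subset_closure (Set.mem_insert_of_mem _ rfl)
    have hA1B1 : zpowers (π x) ≤ closure {π x, π y} := zpowers_le.mpr hxB1
    have hB1cardvd : Nat.card (closure ({π x, π y} : Set (H ⧸ derivedSeries H 2))) ∣ p ^ 2 :=
      hKbar_card ▸ card_dvd_of_le hB1le
    have hpB1 : p ∣ Nat.card (closure ({π x, π y} : Set (H ⧸ derivedSeries H 2))) :=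
      hA1card ▸ card_dvd_of_le hA1B1
    have hB1card : Nat.card (closure ({π x, π y} : Set (H ⧸ derivedSeries H 2))) = p ^ 2 := by
      obtain ⟨k, hk2, hkeq⟩ := (Nat.dvd_prime_pow hp).mp hB1cardvd
      have hk0 : k ≠ 0 := by
        intro h
        rw [hkeq, h, pow_zero] at hpB1
        have h1 := Nat.le_of_dvd one_pos hpB1
        have h2 := hp.two_le
        omega
      have hk1 : k ≠ 1 := by
        intro h
        rw [h, pow_one] at hkeq
        have heq1 : zpowers (π x) = closure {π x, π y} :=
          Subgroup.eq_of_le_of_card_ge hA1B1 (by rw [hA1card, hkeq])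
        exact hybA (heq1 ▸ hyB1)
      have : k = 2 := by omega
      rw [hkeq, this]
    have hB1eq : closure {π x, π y} = Subgroup.map π ((⊤ : Subgroup H).lowerCentralSeries 1) :=
      Subgroup.eq_of_le_of_card_ge hB1le (by rw [hB1card, hKbar_card])
    have hKdec : closure {x, y} ⊔ derivedSeries H 2 = (⊤ : Subgroup H).lowerCentralSeries 1 := by
      have h1 : Subgroup.map π (closure {x, y}) = Subgroup.map π ((⊤ : Subgroup H).lowerCentralSeries 1) := by
        rw [MonoidHom.map_closure, Set.image_pair]
        exact hB1eq
      have h2 := congrArg (Subgroup.comap π) h1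
      rw [comap_map_eq, comap_map_eq, hker] at h2
      rw [h2, sup_of_le_left hDsubK]
    have hTK : ({x, y} ∪ (derivedSeries H 2 : Set H)) ⊆ ((⊤ : Subgroup H).lowerCentralSeries 1 : Set H) := by
      rintro z (hz | hz)
      · simp only [Set.mem_insert_iff, Set.mem_singleton_iff] at hz
        rcases hz with rfl | rfl
        · exact hxK
        · exact hyK
      · exact hDsubK hz
    have hKT : (⊤ : Subgroup H).lowerCentralSeries 1 ≤ closure ({x, y} ∪ (derivedSeries H 2 : Set H)) := by
      rw [Subgroup.closure_union, closure_eq, hKdec]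
    have hcD : ⁅x, y⁆ ∈ derivedSeries H 2 := hDform ▸ commutator_mem_commutator hxK hyK
    have hZ : ∀ z ∈ zpowers ⁅x, y⁆, ∀ k ∈ (⊤ : Subgroup H).lowerCentralSeries 1, Commute z k := by
      intro z hz k hk
      obtain ⟨i, rfl⟩ := mem_zpowers_iff.mp hz
      exact (hDK _ hcD k hk).zpow_left i
    have hgen2 : ∀ s ∈ ({x, y} ∪ (derivedSeries H 2 : Set H)),
        ∀ t ∈ ({x, y} ∪ (derivedSeries H 2 : Set H)), ⁅s, t⁆ ∈ zpowers ⁅x, y⁆ := by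
      rintro s hs t ht
      rcases hs with hs | hs
      · rcases ht with ht | ht
        · simp only [Set.mem_insert_iff, Set.mem_singleton_iff] at hs ht
          rcases hs with hs' | hs' <;> rcases ht with ht' | ht' <;> rw [hs', ht']
          · rw [commutatorElement_eq_one_iff_commute.mpr (Commute.refl _)]
            exact Subgroup.one_mem _
          · exact mem_zpowers _
          · have hyx : ⁅y, x⁆ = ⁅x, y⁆⁻¹ := (commutatorElement_inv x y).symm
            rw [hyx]
            exact Subgroup.inv_mem _ (mem_zpowers _)
          · rw [commutatorElement_eq_one_iff_commute.mpr (Commute.refl _)]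
            exact Subgroup.one_mem _
        · rw [commutatorElement_eq_one_iff_commute.mpr
            ((hDK t ht s (hTK (Or.inl hs))).symm)]
          exact Subgroup.one_mem _
      · rw [commutatorElement_eq_one_iff_commute.mpr (hDK s hs t (hTK ht))]
        exact Subgroup.one_mem _
    have hmain := aux_comm_mem hTK hKT hZ hgen2
    have hDle : derivedSeries H 2 ≤ zpowers ⁅x, y⁆ := by
      rw [hDform]
      exact commutator_le.mpr fun a ha b hb => hmain a ha b hb
    have hcp : ⁅x, y⁆ ^ p = 1 := by
      have hcx : Commute ⁅x, y⁆ x := hDK _ hcD x hxK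
      have h1 : ⁅x ^ p, y⁆ = ⁅x, y⁆ ^ p := aux_comm_pow hcx p
      have h2 : ⁅x ^ p, y⁆ = 1 :=
        commutatorElement_eq_one_iff_commute.mpr (hDK _ (hpow x hxK) y hyK)
      rw [← h1, h2]
    have hfin : Nat.card (derivedSeries H 2) ∣ p := by
      calc Nat.card (derivedSeries H 2) ∣ Nat.card (zpowers ⁅x, y⁆) := card_dvd_of_le hDle
        _ = orderOf ⁅x, y⁆ := Nat.card_zpowers _
        _ ∣ p := orderOf_dvd_of_pow_eq_one hcp
    rw [hDcard] at hfin
    have hle := Nat.le_of_dvd hp.pos hfin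
    have h2lt : p < p ^ 2 := by nlinarith [hp.two_le]
    omega

end Aux

/-- A derived quotient `H^(d)/H^(d+1)` is small if `H^(d+1) ≠ 1` and it has order `p^(2^d+1)`. -/
def IsSmallDerivedQuotient (p : ℕ) (H : Type*) [Group H] (d : ℕ) : Prop :=
  derivedSeries H (d + 1) ≠ ⊥ ∧
    (derivedSeries H (d + 1)).relIndex (derivedSeries H d) = p ^ (2 ^ d + 1)

/-- Let `p ≥ 5` be a prime and `H` a finite `p`-group of order `p^6` and maximal class
(nilpotency class `5`, i.e. `γ₆(H) = 1` and `γ₅(H) ≠ 1` with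
`γ_i(H) = (⊤ : Subgroup H).lowerCentralSeries (i-1)`). Then `H` has two small derived quotients iff
`H` is not metabelian, i.e. `H'' ≠ 1`. -/
theorem two_small_derived_quotients_iff_not_metabelian {p : ℕ} (hp : p.Prime) (hp5 : 5 ≤ p)
    {H : Type*} [Group H] [Finite H] (hH : IsPGroup p H)
    (hcard : Nat.card H = p ^ 6)
    (hclass : (⊤ : Subgroup H).lowerCentralSeries 5 = ⊥ ∧ (⊤ : Subgroup H).lowerCentralSeries 4 ≠ ⊥) :
    (∃ d₁ d₂ : ℕ, d₁ ≠ d₂ ∧ IsSmallDerivedQuotient p H d₁ ∧ IsSmallDerivedQuotient p H d₂) ↔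
      derivedSeries H 2 ≠ ⊥ := by
  obtain ⟨h5, h4⟩ := hclass
  constructor
  · rintro ⟨d₁, d₂, hne, hs₁, hs₂⟩ hbot
    have hall : ∀ d, 1 ≤ d → derivedSeries H (d + 1) = ⊥ := by
      intro d hd
      induction d, hd using Nat.le_induction with
      | base => exact hbot
      | succ d hd ih =>
        rw [derivedSeries_succ, ih, commutator_bot_left]
    have hd₁ : d₁ = 0 := by
      by_contra h
      exact hs₁.1 (hall d₁ (Nat.one_le_iff_ne_zero.mpr h))
    have hd₂ : d₂ = 0 := by
      by_contra h
      exact hs₂.1 (hall d₂ (Nat.one_le_iff_ne_zero.mpr h))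
    exact hne (hd₁.trans hd₂.symm)
  · intro h2
    -- chain of lower central series cards
    have hmono : ∀ i : ℕ, (⊤ : Subgroup H).lowerCentralSeries (i + 1) ≤ (⊤ : Subgroup H).lowerCentralSeries i :=
      fun i => Subgroup.lowerCentralSeries_antitone ⊤ (Nat.le_succ i)
    have hneq : ∀ i ≤ 4, (⊤ : Subgroup H).lowerCentralSeries (i + 1) ≠ (⊤ : Subgroup H).lowerCentralSeries i := by
      intro i hi heq
      have h4i := aux_lcs_stab i heq 4 (by omega)
      have h5i := aux_lcs_stab i heq 5 (by omega)
      exact h4 (h4i.trans (h5i.symm.trans h5))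
    have hcardlt : ∀ i ≤ 4,
        Nat.card ((⊤ : Subgroup H).lowerCentralSeries (i + 1)) < Nat.card ((⊤ : Subgroup H).lowerCentralSeries i) := by
      intro i hi
      have hdvd := Subgroup.card_dvd_of_le (hmono i)
      have hle := Nat.le_of_dvd Nat.card_pos hdvd
      rcases hle.lt_or_eq with h | h
      · exact h
      · exact absurd (Subgroup.eq_of_le_of_card_ge (hmono i) h.ge) (hneq i hi)
    have hpows : ∀ i : ℕ, ∃ k, Nat.card ((⊤ : Subgroup H).lowerCentralSeries i) = p ^ k := by
      intro i
      have hdv : Nat.card ((⊤ : Subgroup H).lowerCentralSeries i) ∣ p ^ 6 :=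
        hcard ▸ Subgroup.card_subgroup_dvd_card _
      obtain ⟨k, _, hk⟩ := (Nat.dvd_prime_pow hp).mp hdv
      exact ⟨k, hk⟩
    obtain ⟨k1, hk1⟩ := hpows 1
    obtain ⟨k2, hk2⟩ := hpows 2
    obtain ⟨k3, hk3⟩ := hpows 3
    obtain ⟨k4, hk4⟩ := hpows 4
    have hc0 : Nat.card ((⊤ : Subgroup H).lowerCentralSeries 0) = p ^ 6 := by
      rw [Subgroup.lowerCentralSeries_zero, Subgroup.card_top, hcard]
    have hc5 : Nat.card ((⊤ : Subgroup H).lowerCentralSeries 5) = 1 := by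
      rw [h5, Subgroup.card_bot]
    have hlt0 := hcardlt 0 (by omega)
    have hlt1 := hcardlt 1 (by omega)
    have hlt2 := hcardlt 2 (by omega)
    have hlt3 := hcardlt 3 (by omega)
    have hlt4 := hcardlt 4 (by omega)
    rw [hc0, hk1] at hlt0
    rw [hk1, hk2] at hlt1
    rw [hk2, hk3] at hlt2
    rw [hk3, hk4] at hlt3
    rw [hc5, hk4] at hlt4
    have e0 : k1 < 6 := (Nat.pow_lt_pow_iff_right hp.one_lt).mp hlt0
    have e1 : k2 < k1 := (Nat.pow_lt_pow_iff_right hp.one_lt).mp hlt1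
    have e2 : k3 < k2 := (Nat.pow_lt_pow_iff_right hp.one_lt).mp hlt2
    have e3 : k4 < k3 := (Nat.pow_lt_pow_iff_right hp.one_lt).mp hlt3
    have e4 : 1 ≤ k4 := by
      by_contra h
      have hk40 : k4 = 0 := by omega
      rw [hk40, pow_zero] at hlt4
      omega
    have hk1ne5 : k1 ≠ 5 := by
      intro h
      have hmul := Subgroup.card_mul_index ((⊤ : Subgroup H).lowerCentralSeries 1)
      rw [hcard, hk1, h] at hmul
      have hidx : ((⊤ : Subgroup H).lowerCentralSeries 1).index = p := by
        have h' : p ^ 5 * ((⊤ : Subgroup H).lowerCentralSeries 1).index = p ^ 5 * p := by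
          rw [hmul]; ring
        exact Nat.eq_of_mul_eq_mul_left (pow_pos hp.pos 5) h'
      exact aux_not_index_p hp h5 h4 hidx
    have hk14 : k1 = 4 := by omega
    have hk33 : k3 = 2 := by omega
    have hcardK : Nat.card ((⊤ : Subgroup H).lowerCentralSeries 1) = p ^ 4 := by rw [hk1, hk14]
    have hcardL3 : Nat.card ((⊤ : Subgroup H).lowerCentralSeries 3) = p ^ 2 := by rw [hk3, hk33]
    -- commutator containments
    have hDform : derivedSeries H 2 = ⁅(⊤ : Subgroup H).lowerCentralSeries 1, (⊤ : Subgroup H).lowerCentralSeries 1⁆ := rfl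
    have h11 : ⁅(⊤ : Subgroup H).lowerCentralSeries 1, (⊤ : Subgroup H).lowerCentralSeries 1⁆ ≤ (⊤ : Subgroup H).lowerCentralSeries 3 :=
      aux_lcs_comm 1 1
    have hDL3 : derivedSeries H 2 ≤ (⊤ : Subgroup H).lowerCentralSeries 3 := by
      rw [hDform]; exact h11
    have h31 : ⁅(⊤ : Subgroup H).lowerCentralSeries 3, (⊤ : Subgroup H).lowerCentralSeries 1⁆ = ⊥ := by
      have h' : ⁅(⊤ : Subgroup H).lowerCentralSeries 3, (⊤ : Subgroup H).lowerCentralSeries 1⁆ ≤ (⊥ : Subgroup H) := by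
        have hcc := aux_lcs_comm (G := H) 3 1
        rw [show (3 + 1 + 1 : ℕ) = 5 by norm_num, h5] at hcc
        exact hcc
      exact le_bot_iff.mp h'
    have hDK : ∀ d ∈ derivedSeries H 2, ∀ k ∈ (⊤ : Subgroup H).lowerCentralSeries 1, Commute d k := by
      intro d hd k hk
      have hmem := commutator_mem_commutator (hDL3 hd) hk
      rw [h31, Subgroup.mem_bot] at hmem
      exact commutatorElement_eq_one_iff_commute.mp hmem
    -- card of D2 is p
    have hDdvd : Nat.card (derivedSeries H 2) ∣ p ^ 2 :=
      hcardL3 ▸ Subgroup.card_dvd_of_le hDL3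
    obtain ⟨kD, hkD2, hkDeq⟩ := (Nat.dvd_prime_pow hp).mp hDdvd
    have hkD0 : kD ≠ 0 := by
      intro h
      rw [h, pow_zero] at hkDeq
      exact h2 (Subgroup.card_eq_one.mp hkDeq)
    have hkDne2 : kD ≠ 2 := by
      intro h
      exact aux_not_card_sq hp hcard hcardK hDK h2 (by rw [hkDeq, h])
    have hkD1 : kD = 1 := by omega
    have hDcard : Nat.card (derivedSeries H 2) = p := by
      rw [hkDeq, hkD1, pow_one]
    -- build the two small derived quotients
    have hD1card : Nat.card (derivedSeries H 1) = p ^ 4 := hcardK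
    have hsub : derivedSeries H 2 ≤ derivedSeries H 1 := by
      rw [hDform]
      exact (commutator_le_left _ _ :
        ⁅(⊤ : Subgroup H).lowerCentralSeries 1, (⊤ : Subgroup H).lowerCentralSeries 1⁆ ≤ (⊤ : Subgroup H).lowerCentralSeries 1)
    refine ⟨0, 1, by norm_num, ⟨?_, ?_⟩, ⟨h2, ?_⟩⟩
    · intro h
      apply h2
      have hle' : derivedSeries H 2 ≤ derivedSeries H 1 := hsub
      rw [h] at hle'
      exact le_bot_iff.mp hle'
    · -- relIndex D1 D0 = p^2
      have hmul := Subgroup.card_mul_index (derivedSeries H 1)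
      rw [hcard, hD1card] at hmul
      have hidx : (derivedSeries H 1).index = p ^ 2 := by
        have h' : p ^ 4 * (derivedSeries H 1).index = p ^ 4 * p ^ 2 := by rw [hmul]; ring
        exact Nat.eq_of_mul_eq_mul_left (pow_pos hp.pos 4) h'
      rw [derivedSeries_zero, relIndex_top_right, hidx]
      norm_num
    · -- relIndex D2 D1 = p^3
      have htrans := relIndex_mul_relIndex (⊥ : Subgroup H) (derivedSeries H 2)
        (derivedSeries H 1) bot_le hsub
      rw [relIndex_bot_left, relIndex_bot_left, hDcard, hD1card] at htrans
      have h' : p * (derivedSeries H 2).relIndex (derivedSeries H 1) = p * p ^ 3 := by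
        rw [htrans]; ring
      have hrel := Nat.eq_of_mul_eq_mul_left hp.pos h'
      rw [hrel]
      norm_num
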